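/- In the twisted Heisenberg–Virasoro algebra, the elements I(0), C_L, C_{LI}, C_I span the center: an element is central if and only if it is a linear combination of I(0), C_L, C_{LI}, C_I. -/

import Mathlib

/-- In the twisted Heisenberg–Virasoro algebra, the elements
`I(0), C_L, C_{LI}, C_I` span the center: an element is central if and only if it is a
linear combination of `I(0), C_L, C_{LI}, C_I`. -/
theorem stmt2
    (HV : Type) [LieRing HV] [LieAlgebra ℂ HV]
    (L I : ℤ → HV) (CL CLI CI : HV)
    (bHV : Module.Basis (ℤ ⊕ ℤ ⊕ Fin 3) ℂ HV)
    (hb1 : ∀ n, bHV (Sum.inl n) = L n)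
    (hb2 : ∀ n, bHV (Sum.inr (Sum.inl n)) = I n)
    (hb3 : bHV (Sum.inr (Sum.inr 0)) = CL)
    (hb4 : bHV (Sum.inr (Sum.inr 1)) = CLI)
    (hb5 : bHV (Sum.inr (Sum.inr 2)) = CI)
    (hLL : ∀ n m : ℤ, ⁅L n, L m⁆ =
      ((n : ℂ) - m) • L (n + m) + (if n = -m then ((n : ℂ)^3 - n) / 12 else 0) • CL)
    (hLI : ∀ n m : ℤ, ⁅L n, I m⁆ =
      (-(m : ℂ)) • I (n + m) - (if n = -m then (n : ℂ)^2 + n else 0) • CLI)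
    (hII : ∀ n m : ℤ, ⁅I n, I m⁆ = (if n = -m then (n : ℂ) else 0) • CI)
    (hCL : ∀ x : HV, ⁅CL, x⁆ = 0) (hCLI : ∀ x : HV, ⁅CLI, x⁆ = 0)
    (hCI : ∀ x : HV, ⁅CI, x⁆ = 0)
    (x : HV) :
    (∀ y : HV, ⁅x, y⁆ = 0) ↔
      x ∈ Submodule.span ℂ ({I 0, CL, CLI, CI} : Set HV) := by
  classical
  have hcen3 : ∀ k : Fin 3, ∀ y : HV, ⁅bHV (Sum.inr (Sum.inr k)), y⁆ = 0 := by
    intro k y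
    fin_cases k
    · show ⁅bHV (Sum.inr (Sum.inr 0)), y⁆ = 0
      rw [hb3]; exact hCL y
    · show ⁅bHV (Sum.inr (Sum.inr 1)), y⁆ = 0
      rw [hb4]; exact hCLI y
    · show ⁅bHV (Sum.inr (Sum.inr 2)), y⁆ = 0
      rw [hb5]; exact hCI y
  -- `I 0` is central
  have hI0 : ∀ y : HV, ⁅I 0, y⁆ = 0 := by
    have h0 : (LieAlgebra.ad ℂ HV (I 0)) = 0 := by
      apply bHV.ext
      rintro (n | n | k)
      · rw [hb1, LieAlgebra.ad_apply, ← lie_skew, hLI n 0]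
        rcases eq_or_ne n 0 with rfl | hn
        · simp
        · simp [hn]
      · rw [hb2, LieAlgebra.ad_apply, hII]
        simp
      · rw [LieAlgebra.ad_apply, ← lie_skew, hcen3 k]
        simp
    intro y
    have := LinearMap.congr_fun h0 y
    simpa [LieAlgebra.ad_apply] using this
  -- every element of the span is central
  have hcent : ∀ z ∈ Submodule.span ℂ ({I 0, CL, CLI, CI} : Set HV),
      ∀ y : HV, ⁅z, y⁆ = 0 := by
    intro z hz
    induction hz using Submodule.span_induction with
    | mem w hw =>
        rcases hw with rfl | rfl | rfl | rfl
        · exact hI0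
        · exact hCL
        · exact hCLI
        · exact hCI
    | zero => intro y; simp
    | add a b _ _ ha hb => intro y; rw [add_lie, ha y, hb y, add_zero]
    | smul t a _ ha => intro y; rw [smul_lie, ha y, smul_zero]
  constructor
  · intro hx
    -- the eigenvalue function of ad (L 0)
    set lam : (ℤ ⊕ ℤ ⊕ Fin 3) → ℂ :=
      Sum.elim (fun n : ℤ => -(n : ℂ)) (Sum.elim (fun n : ℤ => -(n : ℂ)) (fun _ => 0))
      with hlam
    set T : Module.End ℂ HV := LieAlgebra.ad ℂ HV (L 0) with hT
    have hdiag : ∀ j, T (bHV j) = lam j • bHV j := by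
      rintro (n | n | k)
      · rw [hb1, hT, LieAlgebra.ad_apply, hLL 0 n]
        rcases eq_or_ne n 0 with rfl | hn
        · simp [hlam]
        · have h : ¬ ((0 : ℤ) = -n) := by omega
          simp [h, hlam, hb1]
      · rw [hb2, hT, LieAlgebra.ad_apply, hLI 0 n]
        rcases eq_or_ne n 0 with rfl | hn
        · simp [hlam]
        · have h : ¬ ((0 : ℤ) = -n) := by omega
          simp [h, hlam, hb2]
      · rw [hT, LieAlgebra.ad_apply, ← lie_skew, hcen3 k (L 0)]
        simp [hlam]

    have hTx : T x = 0 := by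
      rw [hT, LieAlgebra.ad_apply, ← lie_skew, hx (L 0), neg_zero]
    -- coordinates are killed by eigenvalues
    have hzero : ∀ i, lam i * bHV.repr x i = 0 := by
      intro i
      have hfun : (bHV.coord i) ∘ₗ (T : HV →ₗ[ℂ] HV) = lam i • bHV.coord i := by
        apply bHV.ext
        intro j
        simp only [LinearMap.comp_apply, LinearMap.smul_apply, hdiag j, map_smul,
          Module.Basis.coord_apply, Module.Basis.repr_self, Finsupp.single_apply, smul_eq_mul]
        by_cases h : j = i
        · subst h; simp
        · simp [h]
      have h1 := LinearMap.congr_fun hfun x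
      simp only [LinearMap.comp_apply, LinearMap.smul_apply, hTx, map_zero,
        Module.Basis.coord_apply, smul_eq_mul] at h1
      simpa using h1.symm
    -- support of the coordinates
    have hsupp : ↑(bHV.repr x).support ⊆
        ({Sum.inl 0, Sum.inr (Sum.inl 0), Sum.inr (Sum.inr 0), Sum.inr (Sum.inr 1),
          Sum.inr (Sum.inr 2)} : Set (ℤ ⊕ ℤ ⊕ Fin 3)) := by
      intro i hi
      have hci : bHV.repr x i ≠ 0 := Finsupp.mem_support_iff.mp hi
      have hli : lam i = 0 := by
        rcases mul_eq_zero.mp (hzero i) with h | h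
        · exact h
        · exact absurd h hci
      rcases i with n | n | k
      · have : (n : ℂ) = 0 := by simpa [hlam] using hli
        have : n = 0 := by exact_mod_cast this
        subst this; simp
      · have : (n : ℂ) = 0 := by simpa [hlam] using hli
        have : n = 0 := by exact_mod_cast this
        subst this; simp
      · fin_cases k <;> simp
    have hx_mem : x ∈ Submodule.span ℂ
        ({L 0, I 0, CL, CLI, CI} : Set HV) := by
      have h1 := bHV.mem_span_repr_support x
      refine Submodule.span_mono ?_ h1
      intro v hv
      rcases hv with ⟨i, hi, rfl⟩
      rcases hsupp hi with rfl | rfl | rfl | rfl | rfl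
      · rw [hb1]; simp
      · rw [hb2]; simp
      · rw [hb3]; simp
      · rw [hb4]; simp
      · rw [hb5]; simp
    rcases Submodule.mem_span_insert.mp hx_mem with ⟨a, z, hz, rfl⟩
    have hz1 : ⁅z, L 1⁆ = 0 := hcent z hz (L 1)
    have hbr : ⁅a • L 0 + z, L 1⁆ = 0 := hx (L 1)
    rw [add_lie, smul_lie, hz1, add_zero, hLL 0 1] at hbr
    have h01 : ((0 : ℤ) = -1) = False := by norm_num
    simp only [h01, if_false] at hbr
    norm_num at hbr
    rcases hbr with hbr | hbr
    · rw [hbr]; simpa using hz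
    · exact absurd hbr (by rw [← hb1 1]; exact bHV.ne_zero _)
  · intro hx y
    exact hcent x hx y
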